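/- Let G be a finite graph and T a tournament on the same vertex set. If for every vertex v the out-neighbourhood N⁺_T(v) is an independent set of G, then χ(G) ≤ 3. -/

import Mathlib

/-- A tournament on `V`: an orientation of the complete graph, i.e. an irreflexive
relation such that for distinct vertices exactly one direction is present. -/
def IsTournament {V : Type*} (r : V → V → Prop) : Prop :=
  (∀ v, ¬ r v v) ∧ ∀ u v : V, u ≠ v → (r u v ↔ ¬ r v u)

/-- If G is a finite graph and T a tournament on the same vertex set such
that every out-neighbourhood N⁺_T(v) is an independent set of G, then χ(G) ≤ 3. -/
theorem stmt_8 {V : Type*} [Fintype V]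
    (G : SimpleGraph V) (r : V → V → Prop) (hr : IsTournament r)
    (h : ∀ v : V, ∀ x, r v x → ∀ y, r v y → ¬ G.Adj x y) :
    G.chromaticNumber ≤ 3 := by
  classical
  have hcol : G.Colorable 3 := by
    by_cases he : ∃ a b, G.Adj a b ∧ r a b
    · obtain ⟨a, b, hab, hrab⟩ := he
      refine ⟨SimpleGraph.Coloring.mk
        (fun v => if r a v then 0 else if v = a then (1 : Fin 3) else 2) ?_⟩
      intro u v huv
      split_ifs <;> try decide
      · rename_i h1 h2
        exact absurd huv (h a u h1 v h2)
      · rename_i h1 h2 h3 h4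
        exfalso; rw [h2, h4] at huv; exact G.loopless.irrefl a huv
      · -- u ≠ a, v ≠ a, ¬ r a u, ¬ r a v : both beaten by b
        rename_i h1 h2 h3 h4
        have hbu : r b u := by
          have hub : u ≠ b := fun e => h1 (e ▸ hrab)
          by_contra hbu
          have hub' : r u b := ((hr.2 u b hub).mpr hbu)
          have hua : r u a := (hr.2 u a h2).mpr h1
          exact h u a hua b hub' hab
        have hbv : r b v := by
          have hvb : v ≠ b := fun e => h3 (e ▸ hrab)
          by_contra hbv
          have hvb' : r v b := ((hr.2 v b hvb).mpr hbv)
          have hva : r v a := (hr.2 v a h4).mpr h3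
          exact h v a hva b hvb' hab
        exact absurd huv (h b u hbu v hbv)
    · refine ⟨SimpleGraph.Coloring.mk (fun _ => 0) ?_⟩
      intro u v huv
      exfalso
      rcases (em (r u v)) with hru | hru
      · exact he ⟨u, v, huv, hru⟩
      · exact he ⟨v, u, huv.symm, (hr.2 v u huv.ne').mpr hru⟩
  exact_mod_cast hcol.chromaticNumber_le
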